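/- Let Q be a real symmetric positive definite d×d matrix, h > 0 and σ > 0. Then the matrix S := (σ²/2)Q⁻¹ − (σ²h/4)I satisfies the discrete Lyapunov (stationary covariance) equation S = (I − hQ) S (I − hQ)ᵀ + σ²h (I − (h/2)Q)(I − (h/2)Q)ᵀ. Consequently S + (σ²h/4)I = (σ²/2)Q⁻¹: the stationary covariance of the postprocessed variable X̄_n = X_n + (σ√h/2)ξ_n equals the exact Gibbs covariance (σ²/2)Q⁻¹, i.e. the postprocessed Euler scheme samples the invariant measure exactly for linear drift in ℝ^d. -/
import Mathlib


open Matrix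

/-- For `Q` real symmetric positive definite, `h > 0`, `σ > 0`, the matrix
`S := (σ²/2)Q⁻¹ - (σ²h/4)I` satisfies the discrete Lyapunov (stationary covariance) equation
`S = (I - hQ) S (I - hQ)ᵀ + σ²h (I - (h/2)Q)(I - (h/2)Q)ᵀ`; consequently
`S + (σ²h/4)I = (σ²/2)Q⁻¹`, i.e. the stationary covariance of the postprocessed Euler scheme
equals the exact Gibbs covariance for a linear drift in `ℝ^d`. -/
theorem postprocessed_euler_linear_exact_covariance
    (d : ℕ) (hd : 1 ≤ d) (Q : Matrix (Fin d) (Fin d) ℝ)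
    (hQsymm : Q.IsSymm) (hQpos : Q.PosDef)
    (h σ : ℝ) (hh : 0 < h) (hσ : 0 < σ)
    (S : Matrix (Fin d) (Fin d) ℝ)
    (hS : S = (σ ^ 2 / 2) • Q⁻¹ - (σ ^ 2 * h / 4) • (1 : Matrix (Fin d) (Fin d) ℝ)) :
    S = (1 - h • Q) * S * (1 - h • Q)ᵀ
        + (σ ^ 2 * h) • ((1 - (h / 2) • Q) * (1 - (h / 2) • Q)ᵀ)
      ∧ S + (σ ^ 2 * h / 4) • (1 : Matrix (Fin d) (Fin d) ℝ) = (σ ^ 2 / 2) • Q⁻¹ := by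
  have hQB : Q * Q⁻¹ = 1 := Matrix.mul_nonsing_inv Q (isUnit_iff_ne_zero.mpr hQpos.det_pos.ne')
  have hBQ : Q⁻¹ * Q = 1 := Matrix.nonsing_inv_mul Q (isUnit_iff_ne_zero.mpr hQpos.det_pos.ne')
  constructor
  · subst hS
    simp only [Matrix.transpose_sub, Matrix.transpose_smul, Matrix.transpose_one, hQsymm.eq,
      mul_sub, sub_mul, Matrix.smul_mul, Matrix.mul_smul, hQB, hBQ, smul_smul,
      mul_one, one_mul, smul_sub]
    module
  · rw [hS]; module
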